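/- With the same setting, fixing q, r, s and viewing the simple eigenvalue λ as a function of 1/p on the positive cone of L¹((a,b),ℝ), λ is Fréchet differentiable at 1/p with derivative λ′(1/p)h = −∫ₐᵇ |w^[1]|² h, where w is the normalized eigenfunction and w^[1] = p(w′+sw). -/

import Mathlib

open MeasureTheory intervalIntegral Set Filter Topology

lemma partsFubini (a b : ℝ) (f g : ℝ → ℂ)
    (hf : IntegrableOn f (Set.Ioc a b)) (hg : IntegrableOn g (Set.Ioc a b)) :
    (∫ x in Set.Ioc a b, f x) * (∫ x in Set.Ioc a b, g x)
      = (∫ x in Set.Ioc a b, f x * ∫ y in Set.Ioc a x, g y)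
        + ∫ x in Set.Ioc a b, g x * ∫ y in Set.Ioc a x, f y := by
  set μ := volume.restrict (Set.Ioc a b) with hμ
  have hfi : Integrable f μ := hf
  have hgi : Integrable g μ := hg
  set K : ℝ → ℝ → ℂ := fun x y =>
    Set.indicator {q : ℝ × ℝ | q.2 ≤ q.1} (fun q => f q.1 * g q.2) (x, y) with hKdef
  have hK : Integrable (Function.uncurry K) (μ.prod μ) := by
    have : Function.uncurry K =
        Set.indicator {q : ℝ × ℝ | q.2 ≤ q.1} (fun q => f q.1 * g q.2) := by
      funext p; rfl
    rw [this]
    exact (hfi.mul_prod hgi).indicator (measurableSet_le measurable_snd measurable_fst)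
  have step1 : ∀ x ∈ Set.Ioc a b, (∫ y, K x y ∂μ) = f x * ∫ y in Set.Ioc a x, g y := by
    intro x hx
    have h1 : ∀ y, K x y = Set.indicator (Set.Iic x) (fun y => f x * g y) y := by
      intro y
      by_cases hyx : y ≤ x <;> simp [hKdef, Set.indicator, hyx]
    simp_rw [h1]
    rw [MeasureTheory.integral_indicator measurableSet_Iic, hμ,
      Measure.restrict_restrict measurableSet_Iic, Set.inter_comm,
      Set.Ioc_inter_Iic, min_eq_right hx.2, MeasureTheory.integral_const_mul]
  have step2 : ∀ y ∈ Set.Ioc a b, (∫ x, K x y ∂μ)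
      = g y * ((∫ x in Set.Ioc a b, f x) - ∫ x in Set.Ioc a y, f x) := by
    intro y hy
    have h1 : ∀ x, K x y = Set.indicator (Set.Ici y) (fun x => f x * g y) x := by
      intro x
      by_cases hyx : y ≤ x <;> simp [hKdef, Set.indicator, hyx]
    simp_rw [h1]
    rw [MeasureTheory.integral_indicator measurableSet_Ici, hμ,
      Measure.restrict_restrict measurableSet_Ici]
    have h2 : Set.Ici y ∩ Set.Ioc a b = Set.Icc y b := by
      ext z
      simp only [Set.mem_inter_iff, Set.mem_Ici, Set.mem_Ioc, Set.mem_Icc]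
      exact ⟨fun hz => ⟨hz.1, hz.2.2⟩, fun hz => ⟨hz.1, hy.1.trans_le hz.1, hz.2⟩⟩
    rw [h2, integral_Icc_eq_integral_Ioc]
    have h3 : (∫ x in Set.Ioc a b, f x)
        = (∫ x in Set.Ioc a y, f x) + ∫ x in Set.Ioc y b, f x := by
      rw [← setIntegral_union (Set.Ioc_disjoint_Ioc_of_le le_rfl) measurableSet_Ioc
        (hf.mono_set (Set.Ioc_subset_Ioc_right hy.2))
        (hf.mono_set (Set.Ioc_subset_Ioc_left hy.1.le)),
        Set.Ioc_union_Ioc_eq_Ioc hy.1.le hy.2]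
    have h4 : (∫ x in Set.Ioc y b, f x * g y) = (∫ x in Set.Ioc y b, f x) * g y := by
      rw [MeasureTheory.integral_mul_const]
    rw [h4, h3]
    ring
  -- measurability and boundedness of the primitive of f
  have hPmeas : AEStronglyMeasurable (fun y => ∫ x in Set.Ioc a y, f x) μ := by
    have hc : ContinuousOn (fun y => ∫ x in Set.Ioc a y, f x) (Set.Icc a b) :=
      continuousOn_primitive ((integrableOn_Icc_iff_integrableOn_Ioc enorm_ne_top).2 hf)
    exact (hc.mono Set.Ioc_subset_Icc_self).aestronglyMeasurable measurableSet_Ioc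
  have hPbd : ∀ᵐ y ∂μ, ‖∫ x in Set.Ioc a y, f x‖ ≤ ∫ x in Set.Ioc a b, ‖f x‖ := by
    filter_upwards [ae_restrict_mem measurableSet_Ioc] with y hy
    calc ‖∫ x in Set.Ioc a y, f x‖ ≤ ∫ x in Set.Ioc a y, ‖f x‖ :=
          norm_integral_le_integral_norm _
      _ ≤ ∫ x in Set.Ioc a b, ‖f x‖ := by
          apply setIntegral_mono_set hf.norm
          · exact Filter.Eventually.of_forall fun x => norm_nonneg _
          · exact HasSubset.Subset.eventuallyLE (Set.Ioc_subset_Ioc_right hy.2)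
  have hgP : Integrable (fun y => g y * ∫ x in Set.Ioc a y, f x) μ := by
    have : Integrable (fun y => (∫ x in Set.Ioc a y, f x) * g y) μ :=
      hgi.bdd_mul hPmeas hPbd
    exact this.congr (Filter.Eventually.of_forall fun y => mul_comm _ _)
  have hconst : Integrable (fun y => g y * ∫ x in Set.Ioc a b, f x) μ :=
    hgi.mul_const _
  have swap : (∫ x, (∫ y, K x y ∂μ) ∂μ) = ∫ y, (∫ x, K x y ∂μ) ∂μ :=
    integral_integral_swap hK
  have lhs1 : (∫ x in Set.Ioc a b, f x * ∫ y in Set.Ioc a x, g y)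
      = ∫ x, (∫ y, K x y ∂μ) ∂μ :=
    (setIntegral_congr_fun measurableSet_Ioc fun x hx => (step1 x hx).symm)
  have rhs1 : (∫ y, (∫ x, K x y ∂μ) ∂μ)
      = (∫ y in Set.Ioc a b, g y * ∫ x in Set.Ioc a b, f x)
        - ∫ y in Set.Ioc a b, g y * ∫ x in Set.Ioc a y, f x := by
    rw [← integral_sub hconst hgP]
    refine setIntegral_congr_fun measurableSet_Ioc fun y hy => ?_
    rw [step2 y hy]; ring
  have hfin : (∫ y in Set.Ioc a b, g y * ∫ x in Set.Ioc a b, f x)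
      = (∫ y in Set.Ioc a b, g y) * ∫ x in Set.Ioc a b, f x := MeasureTheory.integral_mul_const _ _
  rw [lhs1, swap, rhs1, hfin]
  ring

lemma primitive_meas_bdd (a b : ℝ) (f : ℝ → ℂ) (hf : IntegrableOn f (Set.Ioc a b)) :
    AEStronglyMeasurable (fun y => ∫ x in Set.Ioc a y, f x) (volume.restrict (Set.Ioc a b))
    ∧ ∀ᵐ y ∂(volume.restrict (Set.Ioc a b)),
        ‖∫ x in Set.Ioc a y, f x‖ ≤ ∫ x in Set.Ioc a b, ‖f x‖ := by
  constructor
  · have hc : ContinuousOn (fun y => ∫ x in Set.Ioc a y, f x) (Set.Icc a b) :=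
      continuousOn_primitive ((integrableOn_Icc_iff_integrableOn_Ioc enorm_ne_top).2 hf)
    exact (hc.mono Set.Ioc_subset_Icc_self).aestronglyMeasurable measurableSet_Ioc
  · filter_upwards [ae_restrict_mem measurableSet_Ioc] with y hy
    calc ‖∫ x in Set.Ioc a y, f x‖ ≤ ∫ x in Set.Ioc a y, ‖f x‖ :=
          norm_integral_le_integral_norm _
      _ ≤ ∫ x in Set.Ioc a b, ‖f x‖ := by
          apply setIntegral_mono_set hf.norm
          · exact Filter.Eventually.of_forall fun x => norm_nonneg _
          · exact HasSubset.Subset.eventuallyLE (Set.Ioc_subset_Ioc_right hy.2)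

lemma parts2 (a b : ℝ) (hab : a ≤ b) (F G f g : ℝ → ℂ)
    (hf : IntegrableOn f (Set.Ioc a b)) (hg : IntegrableOn g (Set.Ioc a b))
    (hFeq : ∀ x ∈ Set.Icc a b, F x = F a + ∫ t in a..x, f t)
    (hGeq : ∀ x ∈ Set.Icc a b, G x = G a + ∫ t in a..x, g t) :
    F b * G b - F a * G a = ∫ x in Set.Ioc a b, (f x * G x + F x * g x) := by
  set μ := volume.restrict (Set.Ioc a b) with hμ
  have hfi : Integrable f μ := hf
  have hgi : Integrable g μ := hg
  obtain ⟨hPf, hPfbd⟩ := primitive_meas_bdd a b f hf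
  obtain ⟨hPg, hPgbd⟩ := primitive_meas_bdd a b g hg
  have hfPg : Integrable (fun x => f x * ∫ y in Set.Ioc a x, g y) μ := by
    have : Integrable (fun x => (∫ y in Set.Ioc a x, g y) * f x) μ :=
      hfi.bdd_mul hPg hPgbd
    exact this.congr (Filter.Eventually.of_forall fun x => mul_comm _ _)
  have hgPf : Integrable (fun x => (∫ y in Set.Ioc a x, f y) * g x) μ :=
    hgi.bdd_mul hPf hPfbd
  -- rewrite the right-hand side
  have key : (∫ x in Set.Ioc a b, (f x * G x + F x * g x))
      = ∫ x in Set.Ioc a b,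
          (f x * (G a + ∫ y in Set.Ioc a x, g y) + (F a + ∫ y in Set.Ioc a x, f y) * g x) := by
    refine setIntegral_congr_fun measurableSet_Ioc fun x hx => ?_
    have hx' : x ∈ Set.Icc a b := Set.Ioc_subset_Icc_self hx
    rw [hGeq x hx', hFeq x hx', integral_of_le hx'.1, integral_of_le hx'.1]
  have i1 : Integrable (fun x => f x * G a + f x * ∫ y in Set.Ioc a x, g y) μ :=
    (hfi.mul_const _).add hfPg
  have i2 : Integrable (fun x => F a * g x + (∫ y in Set.Ioc a x, f y) * g x) μ :=
    (hgi.const_mul _).add hgPf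
  have key2 : (∫ x in Set.Ioc a b,
        (f x * (G a + ∫ y in Set.Ioc a x, g y) + (F a + ∫ y in Set.Ioc a x, f y) * g x))
      = ∫ x in Set.Ioc a b,
          ((f x * G a + f x * ∫ y in Set.Ioc a x, g y)
            + (F a * g x + (∫ y in Set.Ioc a x, f y) * g x)) :=
    setIntegral_congr_fun measurableSet_Ioc fun x _ => by ring
  have split1 : (∫ x in Set.Ioc a b,
        ((f x * G a + f x * ∫ y in Set.Ioc a x, g y)
          + (F a * g x + (∫ y in Set.Ioc a x, f y) * g x)))
      = (∫ x in Set.Ioc a b, (f x * G a + f x * ∫ y in Set.Ioc a x, g y))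
        + ∫ x in Set.Ioc a b, (F a * g x + (∫ y in Set.Ioc a x, f y) * g x) :=
    integral_add i1 i2
  have split2 : (∫ x in Set.Ioc a b, (f x * G a + f x * ∫ y in Set.Ioc a x, g y))
      = (∫ x in Set.Ioc a b, f x * G a)
        + ∫ x in Set.Ioc a b, f x * ∫ y in Set.Ioc a x, g y :=
    integral_add (hfi.mul_const _) hfPg
  have split3 : (∫ x in Set.Ioc a b, (F a * g x + (∫ y in Set.Ioc a x, f y) * g x))
      = (∫ x in Set.Ioc a b, F a * g x)
        + ∫ x in Set.Ioc a b, (∫ y in Set.Ioc a x, f y) * g x :=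
    integral_add (hgi.const_mul _) hgPf
  have hFb := hFeq b ⟨hab, le_rfl⟩
  have hGb := hGeq b ⟨hab, le_rfl⟩
  rw [integral_of_le hab] at hFb hGb
  have hswap : (∫ x in Set.Ioc a b, (∫ y in Set.Ioc a x, f y) * g x)
      = ∫ x in Set.Ioc a b, g x * ∫ y in Set.Ioc a x, f y :=
    setIntegral_congr_fun measurableSet_Ioc fun x _ => mul_comm _ _
  rw [key, key2, split1, split2, split3, hswap, MeasureTheory.integral_mul_const, MeasureTheory.integral_const_mul,
    hFb, hGb]
  have hPF := partsFubini a b f g hf hg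
  linear_combination hPF

lemma iocEqIoo (a b : ℝ) :
    (volume : Measure ℝ).restrict (Set.Ioc a b) = volume.restrict (Set.Ioo a b) :=
  (Measure.restrict_congr_set Ioo_ae_eq_Ioc).symm

lemma integrable_coe_mul_cont {a b : ℝ} {φ : ℝ → ℝ}
    (hφ : Integrable φ (volume.restrict (Set.Ioo a b))) {ψ : ℝ → ℂ}
    (hψ : ContinuousOn ψ (Set.Icc a b)) :
    Integrable (fun t => (φ t : ℂ) * ψ t) (volume.restrict (Set.Ioo a b)) := by
  obtain ⟨C, hC⟩ := isCompact_Icc.exists_bound_of_continuousOn hψ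
  have hmeas : AEStronglyMeasurable ψ (volume.restrict (Set.Ioo a b)) :=
    (hψ.mono Set.Ioo_subset_Icc_self).aestronglyMeasurable measurableSet_Ioo
  have hbd : ∀ᵐ t ∂(volume.restrict (Set.Ioo a b)), ‖ψ t‖ ≤ C := by
    filter_upwards [ae_restrict_mem measurableSet_Ioo] with t ht
    exact hC t (Set.Ioo_subset_Icc_self ht)
  have := (hφ.ofReal (𝕜 := ℂ)).bdd_mul hmeas hbd
  exact this.congr (Filter.Eventually.of_forall fun t => mul_comm _ _)

lemma integrable_mul_contC {a b : ℝ} {φ : ℝ → ℂ}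
    (hφ : Integrable φ (volume.restrict (Set.Ioo a b))) {ψ : ℝ → ℂ}
    (hψ : ContinuousOn ψ (Set.Icc a b)) :
    Integrable (fun t => φ t * ψ t) (volume.restrict (Set.Ioo a b)) := by
  obtain ⟨C, hC⟩ := isCompact_Icc.exists_bound_of_continuousOn hψ
  have hmeas : AEStronglyMeasurable ψ (volume.restrict (Set.Ioo a b)) :=
    (hψ.mono Set.Ioo_subset_Icc_self).aestronglyMeasurable measurableSet_Ioo
  have hbd : ∀ᵐ t ∂(volume.restrict (Set.Ioo a b)), ‖ψ t‖ ≤ C := by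
    filter_upwards [ae_restrict_mem measurableSet_Ioo] with t ht
    exact hC t (Set.Ioo_subset_Icc_self ht)
  have := hφ.bdd_mul hmeas hbd
  exact this.congr (Filter.Eventually.of_forall fun t => mul_comm _ _)

lemma integrable_mul_contR {a b : ℝ} {φ : ℝ → ℝ}
    (hφ : Integrable φ (volume.restrict (Set.Ioo a b))) {ψ : ℝ → ℝ}
    (hψ : ContinuousOn ψ (Set.Icc a b)) :
    Integrable (fun t => φ t * ψ t) (volume.restrict (Set.Ioo a b)) := by
  obtain ⟨C, hC⟩ := isCompact_Icc.exists_bound_of_continuousOn hψ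
  have hmeas : AEStronglyMeasurable ψ (volume.restrict (Set.Ioo a b)) :=
    (hψ.mono Set.Ioo_subset_Icc_self).aestronglyMeasurable measurableSet_Ioo
  have hbd : ∀ᵐ t ∂(volume.restrict (Set.Ioo a b)), ‖ψ t‖ ≤ C := by
    filter_upwards [ae_restrict_mem measurableSet_Ioo] with t ht
    exact hC t (Set.Ioo_subset_Icc_self ht)
  have := hφ.bdd_mul hmeas hbd
  exact this.congr (Filter.Eventually.of_forall fun t => mul_comm _ _)

lemma intervalIntegral_conj {f : ℝ → ℂ} {a b : ℝ} :
    (∫ t in a..b, (starRingEnd ℂ) (f t)) = (starRingEnd ℂ) (∫ t in a..b, f t) := by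
  simp only [intervalIntegral, integral_conj, map_sub]

/-- Fréchet differentiability of a simple eigenvalue with respect to `1/p` on the
positive cone of `L¹((a,b))`: with `q, r, s` fixed, if for each `σ ∈ L¹` (playing the
role of `1/p`) `lam σ` is an eigenvalue with normalized eigenfunction `w σ`
(quasi-derivative `w1 σ`, so `w′ = σ·w¹ − s·w`), boundary terms vanish and
eigenfunctions depend continuously on `σ` near `invp`, then for perturbations `h ≥ 0`
one has `lam(invp + h) − lam(invp) − f h = o(‖h‖)` where
`f h = −∫ₐᵇ |w¹|² h`. -/
theorem stmt14 (a b : ℝ) (hab : a < b) (q r s : ℝ → ℝ)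
    (hq : IntegrableOn q (Set.Ioo a b))
    (hr : IntegrableOn r (Set.Ioo a b))
    (hs : IntegrableOn s (Set.Ioo a b))
    (hrpos : ∀ᵐ x ∂(volume.restrict (Set.Ioo a b)), 0 < r x)
    (lam : Lp ℝ 1 (volume.restrict (Set.Ioo a b)) → ℝ)
    (w w1 : Lp ℝ 1 (volume.restrict (Set.Ioo a b)) → ℝ → ℂ)
    (hwcont : ∀ σ, ContinuousOn (w σ) (Set.Icc a b))
    (hw1cont : ∀ σ, ContinuousOn (w1 σ) (Set.Icc a b))
    (hsol : ∀ σ, ∀ x ∈ Set.Icc a b,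
      w σ x = w σ a + ∫ t in a..x,
        ((σ t : ℝ) * w1 σ t - (s t : ℝ) * w σ t) ∧
      w1 σ x = w1 σ a + ∫ t in a..x,
        ((s t : ℝ) * w1 σ t + ((q t : ℝ) - (lam σ : ℝ) * (r t : ℝ)) * w σ t))
    (hnontrivial : ∀ σ, ∃ x ∈ Set.Icc a b, w σ x ≠ 0)
    (hnorm : ∀ σ, ∫ x in a..b, ‖w σ x‖ ^ 2 * r x = 1)
    (hbdry : ∀ σ τ,
      w σ b * (starRingEnd ℂ) (w1 τ b) - (starRingEnd ℂ) (w τ b) * w1 σ b =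
      w σ a * (starRingEnd ℂ) (w1 τ a) - (starRingEnd ℂ) (w τ a) * w1 σ a)
    (invp : Lp ℝ 1 (volume.restrict (Set.Ioo a b)))
    (hinvp_pos : ∀ᵐ x ∂(volume.restrict (Set.Ioo a b)), 0 < invp x)
    (heigcont : ∀ ε > 0, ∃ δ > 0, ∀ τ, ‖τ - invp‖ < δ →
      ∀ x ∈ Set.Icc a b, ‖w τ x - w invp x‖ < ε ∧ ‖w1 τ x - w1 invp x‖ < ε)
    (f : Lp ℝ 1 (volume.restrict (Set.Ioo a b)) →L[ℝ] ℝ)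
    (hf : ∀ h, f h = -∫ x in a..b, ‖w1 invp x‖ ^ 2 * h x) :
    ∀ ε > 0, ∃ δ > 0, ∀ h : Lp ℝ 1 (volume.restrict (Set.Ioo a b)),
      0 ≤ h → ‖h‖ < δ →
        |lam (invp + h) - lam invp - f h| ≤ ε * ‖h‖ := by
  intro ε hε
  -- basic integrability
  have hq' : Integrable q (volume.restrict (Set.Ioo a b)) := hq
  have hr' : Integrable r (volume.restrict (Set.Ioo a b)) := hr
  have hs' : Integrable s (volume.restrict (Set.Ioo a b)) := hs
  -- notation for the unperturbed objects
  have hu := hwcont invp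
  have hu1 := hw1cont invp
  -- bound for the quasi-derivative
  obtain ⟨M, hM⟩ := isCompact_Icc.exists_bound_of_continuousOn hu1
  have hM0 : 0 ≤ M := le_trans (norm_nonneg _) (hM a ⟨le_rfl, hab.le⟩)
  -- the constant C
  set C : ℝ := ∫ x, |r x| * ‖w invp x‖ ∂(volume.restrict (Set.Ioo a b)) with hCdef
  have hCint : Integrable (fun x => |r x| * ‖w invp x‖) (volume.restrict (Set.Ioo a b)) :=
    integrable_mul_contR hr'.abs hu.norm
  have hC0 : 0 ≤ C :=
    integral_nonneg fun x => mul_nonneg (abs_nonneg _) (norm_nonneg _)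
  -- choice of ε₀
  set ε₀ : ℝ := min (1 / (2 * (C + 1))) (ε / (2 * (M ^ 2 + M + 1) * (C + 1))) with hε₀def
  have hε₀pos : 0 < ε₀ := by
    apply lt_min
    · positivity
    · apply div_pos hε; positivity
  have hε₀1 : ε₀ ≤ 1 / (2 * (C + 1)) := min_le_left _ _
  have hε₀2 : ε₀ ≤ ε / (2 * (M ^ 2 + M + 1) * (C + 1)) := min_le_right _ _
  have hε₀C : C * ε₀ ≤ 1 / 2 := by
    rw [le_div_iff₀ (by positivity : (0:ℝ) < 2 * (C + 1))] at hε₀1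
    nlinarith [hε₀pos.le]
  have hε₀ε : 2 * (M * ε₀ + M ^ 2 * (C * ε₀)) ≤ ε := by
    rw [le_div_iff₀ (by positivity : (0:ℝ) < 2 * (M ^ 2 + M + 1) * (C + 1))] at hε₀2
    nlinarith [hε₀pos.le, hM0, hC0, mul_nonneg hε₀pos.le hM0,
      mul_nonneg hε₀pos.le hC0,
      mul_nonneg (mul_nonneg hε₀pos.le hM0) hM0,
      mul_nonneg (mul_nonneg (mul_nonneg hε₀pos.le hM0) hM0) hC0,
      mul_nonneg (mul_nonneg hε₀pos.le hM0) hC0]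
  obtain ⟨δ₀, hδ₀pos, hδ₀⟩ := heigcont ε₀ hε₀pos
  refine ⟨δ₀, hδ₀pos, fun h hh hhδ => ?_⟩
  set τ := invp + h with hτdef
  have hτclose : ‖τ - invp‖ < δ₀ := by
    rw [hτdef, add_sub_cancel_left]; exact hhδ
  have hclose := hδ₀ τ hτclose
  have hv := hwcont τ
  have hv1 := hw1cont τ
  have hcv : ContinuousOn (fun t => (starRingEnd ℂ) (w τ t)) (Set.Icc a b) :=
    RCLike.continuous_conj.comp_continuousOn hv
  have hcv1 : ContinuousOn (fun t => (starRingEnd ℂ) (w1 τ t)) (Set.Icc a b) :=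
    RCLike.continuous_conj.comp_continuousOn hv1
  have hinvpInt : Integrable (fun t => (invp t : ℝ)) (volume.restrict (Set.Ioo a b)) := L1.integrable_coeFn invp
  have hτInt : Integrable (fun t => (τ t : ℝ)) (volume.restrict (Set.Ioo a b)) := L1.integrable_coeFn τ
  have hhInt : Integrable (fun t => (h t : ℝ)) (volume.restrict (Set.Ioo a b)) := L1.integrable_coeFn h
  -- the four integrands
  set F1 : ℝ → ℂ := fun t => (invp t : ℝ) * w1 invp t - (s t : ℝ) * w invp t with hF1def
  set G1 : ℝ → ℂ := fun t =>
    (s t : ℝ) * w1 invp t + ((q t : ℝ) - (lam invp : ℝ) * (r t : ℝ)) * w invp t with hG1def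
  set F2 : ℝ → ℂ := fun t =>
    (τ t : ℝ) * (starRingEnd ℂ) (w1 τ t) - (s t : ℝ) * (starRingEnd ℂ) (w τ t) with hF2def
  set G2 : ℝ → ℂ := fun t =>
    (s t : ℝ) * (starRingEnd ℂ) (w1 τ t)
      + ((q t : ℝ) - (lam τ : ℝ) * (r t : ℝ)) * (starRingEnd ℂ) (w τ t) with hG2def
  have hqlr : ∀ (lm : ℝ), Integrable (fun t => q t - lm * r t) (volume.restrict (Set.Ioo a b)) :=
    fun lm => hq'.sub (hr'.const_mul lm)
  have hF1int : Integrable F1 (volume.restrict (Set.Ioo a b)) :=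
    (integrable_coe_mul_cont hinvpInt hu1).sub (integrable_coe_mul_cont hs' hu)
  have hG1int : Integrable G1 (volume.restrict (Set.Ioo a b)) := by
    have := (integrable_coe_mul_cont hs' hu1).add
      (integrable_coe_mul_cont (hqlr (lam invp)) hu)
    exact this.congr (Filter.Eventually.of_forall fun t => by
      simp only [Pi.add_apply, hG1def]; push_cast; ring)
  have hF2int : Integrable F2 (volume.restrict (Set.Ioo a b)) :=
    (integrable_coe_mul_cont hτInt hcv1).sub (integrable_coe_mul_cont hs' hcv)
  have hG2int : Integrable G2 (volume.restrict (Set.Ioo a b)) := by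
    have := (integrable_coe_mul_cont hs' hcv1).add
      (integrable_coe_mul_cont (hqlr (lam τ)) hcv)
    exact this.congr (Filter.Eventually.of_forall fun t => by
      simp only [Pi.add_apply, hG2def]; push_cast; ring)
  -- ODE in integral form
  have hueq : ∀ x ∈ Set.Icc a b, w invp x = w invp a + ∫ t in a..x, F1 t :=
    fun x hx => (hsol invp x hx).1
  have hu1eq : ∀ x ∈ Set.Icc a b, w1 invp x = w1 invp a + ∫ t in a..x, G1 t :=
    fun x hx => (hsol invp x hx).2
  have hcveq : ∀ x ∈ Set.Icc a b,
      (starRingEnd ℂ) (w τ x) = (starRingEnd ℂ) (w τ a) + ∫ t in a..x, F2 t := by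
    intro x hx
    have h2 := congrArg (starRingEnd ℂ) (hsol τ x hx).1
    rw [map_add, ← _root_.intervalIntegral_conj] at h2
    rw [h2]
    congr 1
    refine intervalIntegral.integral_congr fun t _ => ?_
    simp [hF2def, map_sub, map_mul, Complex.conj_ofReal]
  have hcv1eq : ∀ x ∈ Set.Icc a b,
      (starRingEnd ℂ) (w1 τ x) = (starRingEnd ℂ) (w1 τ a) + ∫ t in a..x, G2 t := by
    intro x hx
    have h2 := congrArg (starRingEnd ℂ) (hsol τ x hx).2
    rw [map_add, ← _root_.intervalIntegral_conj] at h2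
    rw [h2]
    congr 1
    refine intervalIntegral.integral_congr fun t _ => ?_
    simp [hG2def, map_add, map_sub, map_mul, Complex.conj_ofReal]
  -- integrability over Ioc
  have hIoc : ∀ {X : ℝ → ℂ}, Integrable X (volume.restrict (Set.Ioo a b)) → IntegrableOn X (Set.Ioc a b) := by
    intro X hX; rw [IntegrableOn, iocEqIoo]; exact hX
  have hcast : ∀ (g : ℝ → ℝ), Integrable g (volume.restrict (Set.Ioo a b)) →
      (∫ x, ((g x : ℝ) : ℂ) ∂(volume.restrict (Set.Ioo a b)))
        = ((∫ x, g x ∂(volume.restrict (Set.Ioo a b)) : ℝ) : ℂ) := by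
    intro g hg
    rw [← Complex.ofRealCLM_apply, ← ContinuousLinearMap.integral_comp_comm _ hg]
    simp only [Complex.ofRealCLM_apply]
  -- the two products via parts2
  have P1 := parts2 a b hab.le (w invp) (fun t => (starRingEnd ℂ) (w1 τ t)) F1 G2
    (hIoc hF1int) (hIoc hG2int) hueq hcv1eq
  have P2 := parts2 a b hab.le (fun t => (starRingEnd ℂ) (w τ t)) (w1 invp) F2 G1
    (hIoc hF2int) (hIoc hG1int) hcveq hu1eq
  -- integrability of the integrands appearing in P1, P2
  have hP1int : Integrable (fun x => F1 x * (starRingEnd ℂ) (w1 τ x) + w invp x * G2 x) (volume.restrict (Set.Ioo a b)) :=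
    (integrable_mul_contC hF1int hcv1).add
      ((integrable_mul_contC hG2int hu).congr
        (Filter.Eventually.of_forall fun t => mul_comm _ _))
  have hP2int : Integrable (fun x => F2 x * w1 invp x + (starRingEnd ℂ) (w τ x) * G1 x) (volume.restrict (Set.Ioo a b)) :=
    (integrable_mul_contC hF2int hu1).add
      ((integrable_mul_contC hG1int hcv).congr
        (Filter.Eventually.of_forall fun t => mul_comm _ _))
  -- boundary terms cancel
  have hzero : (∫ x, ((F1 x * (starRingEnd ℂ) (w1 τ x) + w invp x * G2 x)
      - (F2 x * w1 invp x + (starRingEnd ℂ) (w τ x) * G1 x)) ∂(volume.restrict (Set.Ioo a b))) = 0 := by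
    rw [integral_sub hP1int hP2int]
    have hB := hbdry invp τ
    have hP1' : (∫ x, (F1 x * (starRingEnd ℂ) (w1 τ x) + w invp x * G2 x) ∂(volume.restrict (Set.Ioo a b)))
        = w invp b * (starRingEnd ℂ) (w1 τ b) - w invp a * (starRingEnd ℂ) (w1 τ a) := by
      rw [← iocEqIoo]; exact P1.symm
    have hP2' : (∫ x, (F2 x * w1 invp x + (starRingEnd ℂ) (w τ x) * G1 x) ∂(volume.restrict (Set.Ioo a b)))
        = (starRingEnd ℂ) (w τ b) * w1 invp b - (starRingEnd ℂ) (w τ a) * w1 invp a := by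
      rw [← iocEqIoo]; exact P2.symm
    rw [hP1', hP2']
    linear_combination hB
  -- key integrable products
  have hcontu1cv1 : ContinuousOn (fun x => w1 invp x * (starRingEnd ℂ) (w1 τ x))
      (Set.Icc a b) := hu1.mul hcv1
  have hcontucv : ContinuousOn (fun x => w invp x * (starRingEnd ℂ) (w τ x))
      (Set.Icc a b) := hu.mul hcv
  have hcontucu : ContinuousOn (fun x => w invp x * (starRingEnd ℂ) (w invp x))
      (Set.Icc a b) := hu.mul (RCLike.continuous_conj.comp_continuousOn hu)
  have hHint : Integrable (fun x => (h x : ℝ) *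
      (w1 invp x * (starRingEnd ℂ) (w1 τ x))) (volume.restrict (Set.Ioo a b)) :=
    integrable_coe_mul_cont hhInt hcontu1cv1
  have hDint : Integrable (fun x => (r x : ℝ) *
      (w invp x * (starRingEnd ℂ) (w τ x))) (volume.restrict (Set.Ioo a b)) :=
    integrable_coe_mul_cont hr' hcontucv
  have hD0int : Integrable (fun x => (r x : ℝ) *
      (w invp x * (starRingEnd ℂ) (w invp x))) (volume.restrict (Set.Ioo a b)) :=
    integrable_coe_mul_cont hr' hcontucu
  set H : ℂ := ∫ x, (h x : ℝ) * (w1 invp x * (starRingEnd ℂ) (w1 τ x)) ∂(volume.restrict (Set.Ioo a b)) with hHdef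
  set D : ℂ := ∫ x, (r x : ℝ) * (w invp x * (starRingEnd ℂ) (w τ x)) ∂(volume.restrict (Set.Ioo a b)) with hDdef
  -- pointwise Lagrange identity
  have hae : ∀ᵐ x ∂(volume.restrict (Set.Ioo a b)), (τ x : ℝ) = invp x + h x := by
    filter_upwards [Lp.coeFn_add invp h] with x hx
    rw [hτdef]; rw [hx]; rfl
  have hkey : ((lam τ : ℂ) - (lam invp : ℂ)) * D = -H := by
    have hptw : (fun x => ((F1 x * (starRingEnd ℂ) (w1 τ x) + w invp x * G2 x)
        - (F2 x * w1 invp x + (starRingEnd ℂ) (w τ x) * G1 x)))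
        =ᵐ[(volume.restrict (Set.Ioo a b))] fun x =>
          ((lam invp : ℂ) - (lam τ : ℂ)) *
            ((r x : ℝ) * (w invp x * (starRingEnd ℂ) (w τ x)))
          - (h x : ℝ) * (w1 invp x * (starRingEnd ℂ) (w1 τ x)) := by
      filter_upwards [hae] with x hx
      simp only [hF1def, hG1def, hF2def, hG2def]
      rw [hx]
      push_cast
      ring
    have h2 : (∫ x, (((lam invp : ℂ) - (lam τ : ℂ)) *
          ((r x : ℝ) * (w invp x * (starRingEnd ℂ) (w τ x)))
        - (h x : ℝ) * (w1 invp x * (starRingEnd ℂ) (w1 τ x)))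
          ∂(volume.restrict (Set.Ioo a b)))
        = ((lam invp : ℂ) - (lam τ : ℂ)) * D - H := by
      rw [integral_sub (hDint.const_mul _) hHint, MeasureTheory.integral_const_mul]
    have h3 := (integral_congr_ae hptw).symm.trans hzero
    rw [h2] at h3
    linear_combination -h3
  -- D is close to 1
  have hnorm1 : (∫ x, (r x : ℝ) * (w invp x * (starRingEnd ℂ) (w invp x)) ∂(volume.restrict (Set.Ioo a b))) = 1 := by
    have hptw : ∀ x, (r x : ℂ) * (w invp x * (starRingEnd ℂ) (w invp x))
        = ((‖w invp x‖ ^ 2 * r x : ℝ) : ℂ) := by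
      intro x
      rw [Complex.mul_conj, Complex.normSq_eq_norm_sq]
      push_cast
      ring
    have hInt1 : Integrable (fun x => ‖w invp x‖ ^ 2 * r x)
        (volume.restrict (Set.Ioo a b)) :=
      (integrable_mul_contR hr' (hu.norm.pow 2)).congr
        (Filter.Eventually.of_forall fun x => mul_comm _ _)
    rw [show (fun x => (r x : ℂ) * (w invp x * (starRingEnd ℂ) (w invp x)))
        = fun x => ((‖w invp x‖ ^ 2 * r x : ℝ) : ℂ) from funext hptw,
      hcast _ hInt1]
    have hn := hnorm invp
    rw [intervalIntegral.integral_of_le hab.le, iocEqIoo] at hn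
    rw [hn]
    norm_num
  have hDnear : ‖D - 1‖ ≤ C * ε₀ := by
    have hsub : D - 1 = ∫ x, ((r x : ℝ) : ℂ) *
        (w invp x * ((starRingEnd ℂ) (w τ x) - (starRingEnd ℂ) (w invp x))) ∂(volume.restrict (Set.Ioo a b)) := by
      rw [hDdef, ← hnorm1, ← integral_sub hDint hD0int]
      refine integral_congr_ae (Filter.Eventually.of_forall fun x => ?_)
      ring
    rw [hsub]
    have hb1 : ∀ᵐ x ∂(volume.restrict (Set.Ioo a b)), ‖((r x : ℝ) : ℂ) *
        (w invp x * ((starRingEnd ℂ) (w τ x) - (starRingEnd ℂ) (w invp x)))‖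
        ≤ (|r x| * ‖w invp x‖) * ε₀ := by
      filter_upwards [ae_restrict_mem measurableSet_Ioo] with x hx
      have hcx : ‖w τ x - w invp x‖ ≤ ε₀ := (hclose x (Set.Ioo_subset_Icc_self hx)).1.le
      have heq : ‖((r x : ℝ) : ℂ) *
          (w invp x * ((starRingEnd ℂ) (w τ x) - (starRingEnd ℂ) (w invp x)))‖
          = (|r x| * ‖w invp x‖) * ‖w τ x - w invp x‖ := by
        rw [norm_mul, norm_mul, ← map_sub, RCLike.norm_conj]
        simp [Real.norm_eq_abs, mul_assoc]
      rw [heq]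
      exact mul_le_mul_of_nonneg_left hcx (mul_nonneg (abs_nonneg _) (norm_nonneg _))
    calc ‖∫ x, ((r x : ℝ) : ℂ) *
          (w invp x * ((starRingEnd ℂ) (w τ x) - (starRingEnd ℂ) (w invp x))) ∂(volume.restrict (Set.Ioo a b))‖
        ≤ ∫ x, (|r x| * ‖w invp x‖) * ε₀ ∂(volume.restrict (Set.Ioo a b)) :=
          norm_integral_le_of_norm_le (hCint.mul_const _) hb1
      _ = C * ε₀ := by rw [MeasureTheory.integral_mul_const]
  have hDlb : (1:ℝ)/2 ≤ ‖D‖ := by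
    have h1 : ‖(1:ℂ)‖ - ‖D‖ ≤ ‖D - 1‖ := by
      rw [norm_sub_rev]; exact norm_sub_norm_le 1 D
    rw [norm_one] at h1
    linarith [hDnear, hε₀C]
  -- the quantity I2
  set I2 : ℝ := ∫ x, ‖w1 invp x‖ ^ 2 * h x ∂(volume.restrict (Set.Ioo a b)) with hI2def
  have hI2int : Integrable (fun x => ‖w1 invp x‖ ^ 2 * h x) (volume.restrict (Set.Ioo a b)) := by
    have := integrable_mul_contR hhInt (hu1.norm.pow 2)
    exact this.congr (Filter.Eventually.of_forall fun x => mul_comm _ _)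
  have hfh : f h = -I2 := by
    rw [hf h, hI2def]
    congr 1
    rw [intervalIntegral.integral_of_le hab.le, iocEqIoo]
  have hhnonneg : ∀ᵐ x ∂(volume.restrict (Set.Ioo a b)), 0 ≤ h x := by
    have h0 := (Lp.coeFn_nonneg h).2 hh
    filter_upwards [h0] with x hx using hx
  have hnormh : ‖h‖ = ∫ x, h x ∂(volume.restrict (Set.Ioo a b)) := by
    rw [L1.norm_eq_integral_norm]
    refine integral_congr_ae ?_
    filter_upwards [hhnonneg] with x hx
    exact Real.norm_of_nonneg hx
  have hI2bd : |I2| ≤ M ^ 2 * ‖h‖ := by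
    have hb : ∀ᵐ x ∂(volume.restrict (Set.Ioo a b)), ‖‖w1 invp x‖ ^ 2 * h x‖ ≤ M ^ 2 * h x := by
      filter_upwards [ae_restrict_mem measurableSet_Ioo, hhnonneg] with x hx hx0
      rw [Real.norm_eq_abs, abs_of_nonneg (mul_nonneg (by positivity) hx0)]
      exact mul_le_mul_of_nonneg_right
        (pow_le_pow_left₀ (norm_nonneg _) (hM x (Set.Ioo_subset_Icc_self hx)) 2) hx0
    have h1 : |I2| ≤ ∫ x, M ^ 2 * h x ∂(volume.restrict (Set.Ioo a b)) := by
      rw [hI2def, ← Real.norm_eq_abs]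
      exact norm_integral_le_of_norm_le (hhInt.const_mul _) hb
    rw [MeasureTheory.integral_const_mul] at h1
    rw [hnormh]
    exact h1
  have hconju1 : ContinuousOn (fun x => w1 invp x * (starRingEnd ℂ) (w1 invp x))
      (Set.Icc a b) := hu1.mul (RCLike.continuous_conj.comp_continuousOn hu1)
  have hHI2int : Integrable
      (fun x => ((h x : ℝ) : ℂ) * (w1 invp x * (starRingEnd ℂ) (w1 invp x))) (volume.restrict (Set.Ioo a b)) :=
    integrable_coe_mul_cont hhInt hconju1
  have hI2C : (I2 : ℂ) = ∫ x, ((h x : ℝ) : ℂ) *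
      (w1 invp x * (starRingEnd ℂ) (w1 invp x)) ∂(volume.restrict (Set.Ioo a b)) := by
    rw [hI2def, ← hcast _ hI2int]
    refine integral_congr_ae (Filter.Eventually.of_forall fun x => ?_)
    show ((‖w1 invp x‖ ^ 2 * h x : ℝ) : ℂ)
      = ((h x : ℝ) : ℂ) * (w1 invp x * (starRingEnd ℂ) (w1 invp x))
    rw [Complex.mul_conj, Complex.normSq_eq_norm_sq]
    push_cast
    ring
  have hEH : ‖-H + (I2 : ℂ)‖ ≤ M * ε₀ * ‖h‖ := by
    have hsub : -H + (I2 : ℂ) = ∫ x, ((h x : ℝ) : ℂ) *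
        (w1 invp x * ((starRingEnd ℂ) (w1 invp x) - (starRingEnd ℂ) (w1 τ x))) ∂(volume.restrict (Set.Ioo a b)) := by
      rw [neg_add_eq_sub, hI2C, hHdef, ← integral_sub hHI2int hHint]
      refine integral_congr_ae (Filter.Eventually.of_forall fun x => ?_)
      ring
    rw [hsub]
    have hb : ∀ᵐ x ∂(volume.restrict (Set.Ioo a b)), ‖((h x : ℝ) : ℂ) *
        (w1 invp x * ((starRingEnd ℂ) (w1 invp x) - (starRingEnd ℂ) (w1 τ x)))‖
        ≤ |h x| * (M * ε₀) := by
      filter_upwards [ae_restrict_mem measurableSet_Ioo] with x hx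
      have hcx : ‖w1 τ x - w1 invp x‖ ≤ ε₀ := (hclose x (Set.Ioo_subset_Icc_self hx)).2.le
      have heq : ‖((h x : ℝ) : ℂ) *
          (w1 invp x * ((starRingEnd ℂ) (w1 invp x) - (starRingEnd ℂ) (w1 τ x)))‖
          = |h x| * (‖w1 invp x‖ * ‖w1 invp x - w1 τ x‖) := by
        rw [norm_mul, norm_mul, ← map_sub, RCLike.norm_conj]
        simp [Real.norm_eq_abs]
      rw [heq]
      refine mul_le_mul_of_nonneg_left ?_ (abs_nonneg _)
      refine mul_le_mul (hM x (Set.Ioo_subset_Icc_self hx)) ?_ (norm_nonneg _) hM0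
      rw [norm_sub_rev]
      exact hcx
    calc ‖∫ x, ((h x : ℝ) : ℂ) *
          (w1 invp x * ((starRingEnd ℂ) (w1 invp x) - (starRingEnd ℂ) (w1 τ x))) ∂(volume.restrict (Set.Ioo a b))‖
        ≤ ∫ x, |h x| * (M * ε₀) ∂(volume.restrict (Set.Ioo a b)) :=
          norm_integral_le_of_norm_le (hhInt.abs.mul_const _) hb
      _ = (∫ x, |h x| ∂(volume.restrict (Set.Ioo a b))) * (M * ε₀) := by rw [MeasureTheory.integral_mul_const]
      _ = ‖h‖ * (M * ε₀) := by
          rw [L1.norm_eq_integral_norm]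
          simp [Real.norm_eq_abs]
      _ = M * ε₀ * ‖h‖ := by ring
  -- final assembly
  set E : ℝ := lam τ - lam invp - f h with hEdef
  have hEeq : (E : ℂ) = ((lam τ : ℂ) - (lam invp : ℂ)) + (I2 : ℂ) := by
    rw [hEdef, hfh]
    push_cast
    ring
  have hED : (E : ℂ) * D = (-H + (I2 : ℂ)) + (I2 : ℂ) * (D - 1) := by
    rw [hEeq]
    linear_combination hkey
  have hnormED : ‖(E : ℂ) * D‖ ≤ M * ε₀ * ‖h‖ + M ^ 2 * ‖h‖ * (C * ε₀) := by
    rw [hED]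
    calc ‖(-H + (I2 : ℂ)) + (I2 : ℂ) * (D - 1)‖
        ≤ ‖-H + (I2 : ℂ)‖ + ‖(I2 : ℂ) * (D - 1)‖ := norm_add_le _ _
      _ ≤ M * ε₀ * ‖h‖ + |I2| * ‖D - 1‖ := by
          rw [norm_mul, Complex.norm_real, Real.norm_eq_abs]
          exact add_le_add hEH le_rfl
      _ ≤ M * ε₀ * ‖h‖ + M ^ 2 * ‖h‖ * (C * ε₀) :=
          add_le_add le_rfl
            (mul_le_mul hI2bd hDnear (norm_nonneg _) (by positivity))
  have habs : |E| = ‖(E : ℂ)‖ := by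
    rw [Complex.norm_real, Real.norm_eq_abs]
  have hhalf : |E| * (1/2) ≤ M * ε₀ * ‖h‖ + M ^ 2 * ‖h‖ * (C * ε₀) := by
    calc |E| * (1/2) ≤ |E| * ‖D‖ := mul_le_mul_of_nonneg_left hDlb (abs_nonneg E)
      _ = ‖(E : ℂ) * D‖ := by rw [habs, norm_mul]
      _ ≤ _ := hnormED
  have hfinal : |E| ≤ ε * ‖h‖ := by
    have hkey2 : 2 * (M * ε₀ + M ^ 2 * (C * ε₀)) * ‖h‖ ≤ ε * ‖h‖ :=
      mul_le_mul_of_nonneg_right hε₀ε (norm_nonneg h)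
    have hbridge : 2 * (M * ε₀ + M ^ 2 * (C * ε₀)) * ‖h‖
        = 2 * (M * ε₀ * ‖h‖ + M ^ 2 * ‖h‖ * (C * ε₀)) := by ring
    linarith [hhalf, hkey2, hbridge.le, hbridge.ge]
  exact hfinal
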